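/- For n ≥ 1, the overlap number of the complete graph K_n equals the minimum m such that n ≤ C(m, ⌊(m+2)/2⌋). -/

import Mathlib

attribute [-instance] instDecidableEqFin

open Finset
open scoped FinsetFamily

namespace OverlapAux

lemma inter_nonempty_of_card {α : Type*} [DecidableEq α] [Fintype α] {A B : Finset α}
    (h : Fintype.card α < #A + #B) : (A ∩ B).Nonempty := by
  rw [← card_pos]
  have h1 : #(A ∪ B) ≤ Fintype.card α := by
    simpa using card_le_univ (A ∪ B)
  have h2 := card_union_add_card_inter A B
  omega

lemma card_le_card_upShadow {α : Type*} [Fintype α] [DecidableEq α] {𝒜 : Finset (Finset α)}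
    {r : ℕ} (hr2 : 2 * r + 1 ≤ Fintype.card α) (h : (𝒜 : Set (Finset α)).Sized r) :
    𝒜.card ≤ #(∂⁺ 𝒜) := by
  have hc := card_mul_le_card_shadow_mul (h.compls)
  rw [card_compls, shadow_compls, card_compls] at hc
  have hrN : r ≤ Fintype.card α := by omega
  have h3 : Fintype.card α - (Fintype.card α - r) + 1 = r + 1 := by omega
  rw [h3] at hc
  have h4 : #𝒜 * (r + 1) ≤ #𝒜 * (Fintype.card α - r) := by
    apply Nat.mul_le_mul_left
    omega
  have := h4.trans hc
  exact Nat.le_of_mul_le_mul_right this (by omega)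

lemma card_le_card_shadow {α : Type*} [Fintype α] [DecidableEq α] {𝒜 : Finset (Finset α)}
    {r : ℕ} (hr2 : Fintype.card α + 1 ≤ 2 * r) (h : (𝒜 : Set (Finset α)).Sized r) :
    𝒜.card ≤ #(∂ 𝒜) := by
  have hc := card_mul_le_card_shadow_mul h
  have h4 : #(∂ 𝒜) * (Fintype.card α - r + 1) ≤ #(∂ 𝒜) * r := by
    apply Nat.mul_le_mul_left
    omega
  have := hc.trans h4
  exact Nat.le_of_mul_le_mul_right this (by omega)

lemma card_le_card_shadow_of_subset {α : Type*} [DecidableEq α] {T : Finset α}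
    {𝒜 : Finset (Finset α)} {r : ℕ} (hr : 1 ≤ r) (hT : #T + 1 ≤ 2 * r)
    (hsub : ∀ A ∈ 𝒜, A ⊆ T) (hsize : (𝒜 : Set (Finset α)).Sized r) : #𝒜 ≤ #(∂ 𝒜) := by
  classical
  set P : Finset (Finset α × α) := 𝒜.biUnion (fun A => A.image fun x => (A.erase x, x)) with hP
  have hcard : #P = #𝒜 * r := by
    rw [card_biUnion, ← smul_eq_mul, ← Finset.sum_const]
    · apply Finset.sum_congr rfl
      intro A hA
      rw [card_image_of_injective _ (fun x y hxy => congrArg Prod.snd hxy)]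
      exact hsize hA
    · intro A hA B hB hAB
      simp only [disjoint_left]
      intro p hp hq
      simp only [mem_image] at hp hq
      obtain ⟨x, hx, rfl⟩ := hp
      obtain ⟨y, hy, hxy⟩ := hq
      have hy2 : y = x := congrArg Prod.snd hxy
      subst hy2
      have : B = A := by
        have h1 : B.erase y = A.erase y := congrArg Prod.fst hxy
        rw [← insert_erase hy, h1, insert_erase hx]
      exact hAB this.symm
  have hsub2 : P ⊆ (∂ 𝒜).biUnion (fun B => (T \ B).image fun x => (B, x)) := by
    intro p hp
    simp only [hP, mem_biUnion, mem_image] at hp ⊢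
    obtain ⟨A, hA, x, hx, rfl⟩ := hp
    refine ⟨A.erase x, ?_, x, ?_, rfl⟩
    · exact erase_mem_shadow hA hx
    · rw [mem_sdiff]
      exact ⟨hsub A hA hx, notMem_erase _ _⟩
  have hupper : #P ≤ #(∂ 𝒜) * r := by
    calc #P ≤ ∑ B ∈ ∂ 𝒜, #((T \ B).image fun x => (B, x)) :=
          (card_le_card hsub2).trans card_biUnion_le
    _ ≤ ∑ B ∈ ∂ 𝒜, r := by
        apply Finset.sum_le_sum
        intro B hB
        calc #((T \ B).image fun x => (B, x)) ≤ #(T \ B) := card_image_le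
        _ ≤ r := by
            obtain ⟨A, hA, x, hx, rfl⟩ := mem_shadow_iff.1 hB
            have h1 : #(A.erase x) = r - 1 := by rw [card_erase_of_mem hx, hsize hA]
            have h2 : A.erase x ⊆ T := (erase_subset _ _).trans (hsub A hA)
            have h3 := card_le_card h2
            have h4 := card_sdiff_of_subset h2
            omega
    _ = #(∂ 𝒜) * r := by rw [Finset.sum_const, smul_eq_mul]
  rw [hcard] at hupper
  exact Nat.le_of_mul_le_mul_right hupper (by omega)


lemma exists_isInitSeg {α : Type*} [Fintype α] [LinearOrder α] (r : ℕ) :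
    ∀ (k s : ℕ), s + k = (Fintype.card α).choose r →
    ∃ 𝒞 : Finset (Finset α), Colex.IsInitSeg 𝒞 r ∧ #𝒞 = s := by
  classical
  intro k
  induction k with
  | zero =>
    intro s hs
    refine ⟨powersetCard r univ, ⟨?_, ?_⟩, ?_⟩
    · intro A hA
      simpa using (mem_powersetCard.1 hA).2
    · intro A B hA hB
      simp only [mem_powersetCard]
      exact ⟨subset_univ _, hB.2⟩
    · rw [card_powersetCard, card_univ]
      omega
  | succ k ih =>
    intro s hs
    obtain ⟨𝒞, h𝒞, hcard⟩ := ih (s + 1) (by omega)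
    have hne : 𝒞.Nonempty := by
      rw [← card_pos, hcard]; omega
    obtain ⟨M, hM, hMmax⟩ := Finset.exists_max_image 𝒞 toColex hne
    refine ⟨𝒞.erase M, ⟨?_, ?_⟩, ?_⟩
    · intro A hA
      exact h𝒞.1 (mem_of_mem_erase hA)
    · intro A B hA hB
      have hA' : A ∈ 𝒞 := mem_of_mem_erase hA
      have hB' : B ∈ 𝒞 := h𝒞.2 hA' hB
      refine mem_erase.2 ⟨?_, hB'⟩
      intro hBM
      subst hBM
      exact absurd (hB.1.trans_le (hMmax A hA')) (lt_irrefl _)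
    · rw [card_erase_of_mem hM, hcard]
      omega

/-- If a family of `t`-sets in a `2t`-element type contains no set together with its
complement, then its shadow is at least as large. -/
lemma compFree_card_le_shadow {t : ℕ} (ht : 1 ≤ t) (G : Finset (Finset (Fin (2 * t))))
    (hsz : (G : Set (Finset (Fin (2 * t)))).Sized t) (hcf : ∀ A ∈ G, Aᶜ ∉ G) :
    G.card ≤ #(∂ G) := by
  classical
  have hN : Fintype.card (Fin (2 * t)) = 2 * t := Fintype.card_fin _
  -- Step a : #G ≤ (2t-1).choose t
  have hdisj : Disjoint G Gᶜˢ := by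
    rw [disjoint_right]
    intro A hA hA'
    rw [mem_compls] at hA
    exact hcf Aᶜ hA (by simpa using hA')
  have hsubP : G ∪ Gᶜˢ ⊆ powersetCard t univ := by
    intro A hA
    rw [mem_powersetCard_univ]
    rcases mem_union.1 hA with h | h
    · exact hsz h
    · rw [mem_compls] at h
      have := hsz h
      rw [card_compl, hN] at this
      have hAle : #A ≤ 2 * t := by simpa [hN] using card_le_univ A
      omega
  have hsum : 2 * #G ≤ (2 * t).choose t := by
    have := card_le_card hsubP
    rw [card_union_of_disjoint hdisj, card_compls, card_powersetCard, card_univ, hN] at this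
    omega
  have hSplit : (2 * t).choose t = 2 * ((2 * t - 1).choose t) := by
    obtain ⟨u, rfl⟩ : ∃ u, t = u + 1 := ⟨t - 1, by omega⟩
    have h1 : 2 * (u + 1) = (2 * u + 1) + 1 := by ring
    have h4 : 2 * (u + 1) - 1 = 2 * u + 1 := by omega
    rw [h1, Nat.choose_succ_succ]
    simp only [Nat.add_sub_cancel, Nat.succ_eq_add_one]
    have h3 : (2 * u + 1).choose u = (2 * u + 1).choose (u + 1) := by
      rw [← Nat.choose_symm (show u ≤ 2 * u + 1 by omega)]
      congr 1
      omega
    omega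
  have hGbound : #G ≤ (2 * t - 1).choose t := by omega
  -- Step b : initial segment of the same size
  obtain ⟨𝒞, h𝒞, h𝒞card⟩ := exists_isInitSeg (α := Fin (2 * t)) t
    ((Fintype.card (Fin (2 * t))).choose t - #G) #G
    (by
      rw [hN]
      have : #G ≤ (2 * t).choose t := by omega
      omega)
  -- Step c : members of 𝒞 avoid the top element
  have htop : ∀ A ∈ 𝒞, (⟨2 * t - 1, by omega⟩ : Fin (2 * t)) ∉ A := by
    by_contra hcon
    push_neg at hcon
    obtain ⟨A, hA, htopA⟩ := hcon
    set top : Fin (2 * t) := ⟨2 * t - 1, by omega⟩ with htopdef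
    have hD : powersetCard t (univ.erase top) ⊆ 𝒞 := by
      intro B hB
      rw [mem_powersetCard] at hB
      have htopB : top ∉ B := fun h => (mem_erase.1 (hB.1 h)).1 rfl
      refine h𝒞.2 hA ⟨?_, hB.2⟩
      rw [Colex.toColex_lt_toColex_iff_exists_forall_lt]
      refine ⟨top, htopA, htopB, ?_⟩
      intro b hb _
      have hbne : b ≠ top := fun h => htopB (h ▸ hb)
      have : (b : ℕ) < 2 * t := b.2
      have : (b : ℕ) ≠ 2 * t - 1 := fun h => hbne (Fin.ext h)
      exact Fin.lt_def.2 (by simp only [htopdef]; omega)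
    have hAD : A ∉ powersetCard t (univ.erase top) := by
      rw [mem_powersetCard]
      rintro ⟨hsub, -⟩
      exact (mem_erase.1 (hsub htopA)).1 rfl
    have : #(powersetCard t (univ.erase top)) + 1 ≤ #𝒞 := by
      have h1 : insert A (powersetCard t (univ.erase top)) ⊆ 𝒞 :=
        insert_subset hA hD
      have := card_le_card h1
      rw [card_insert_of_notMem hAD] at this
      omega
    rw [card_powersetCard, card_erase_of_mem (mem_univ _), card_univ, hN, h𝒞card] at this
    have h21 : 2 * t - 1 = 2 * t - 1 := rfl
    omega
  -- Step d : restricted local LYM for 𝒞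
  have h𝒞shadow : #𝒞 ≤ #(∂ 𝒞) := by
    apply card_le_card_shadow_of_subset (T := univ.erase (⟨2 * t - 1, by omega⟩ : Fin (2 * t))) ht
    · rw [card_erase_of_mem (mem_univ _), card_univ, hN]
      omega
    · intro A hA x hx
      exact mem_erase.2 ⟨fun h => htop A hA (h ▸ hx), mem_univ _⟩
    · exact h𝒞.1
  -- Step e : Kruskal-Katona
  have hKK : #(∂ 𝒞) ≤ #(∂ G) := by
    apply kruskal_katona hsz (by omega) h𝒞
  omega

/-- Lemma L: an intersecting family of `t`-sets in `Fin (2t)` has an upper shadow at least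
as large. -/
lemma card_le_card_upShadow_of_intersecting {t : ℕ} (ht : 1 ≤ t)
    (F : Finset (Finset (Fin (2 * t)))) (hsz : (F : Set (Finset (Fin (2 * t)))).Sized t)
    (hint : ∀ A ∈ F, ∀ B ∈ F, (A ∩ B).Nonempty) : #F ≤ #(∂⁺ F) := by
  classical
  have hN : Fintype.card (Fin (2 * t)) = 2 * t := Fintype.card_fin _
  have hszc : ((Fᶜˢ : Finset (Finset (Fin (2 * t)))) : Set (Finset (Fin (2 * t)))).Sized t := by
    have := hsz.compls
    rw [hN] at this
    have h2 : 2 * t - t = t := by omega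
    rwa [h2] at this
  have hcf : ∀ A ∈ Fᶜˢ, Aᶜ ∉ Fᶜˢ := by
    intro A hA hA'
    rw [mem_compls] at hA hA'
    rw [compl_compl] at hA'
    obtain ⟨x, hx⟩ := hint _ hA' _ hA
    rw [mem_inter] at hx
    exact (mem_compl.1 hx.2) hx.1
  have := compFree_card_le_shadow ht Fᶜˢ hszc hcf
  rwa [card_compls, shadow_compls, card_compls] at this


/-- Phase 1: push all small sets up to size at least `t`. -/
lemma phase1 {t : ℕ} :
    ∀ (μ : ℕ) (F : Finset (Finset (Fin (2 * t)))),
    IsAntichain (· ⊆ ·) (F : Set (Finset (Fin (2 * t)))) →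
    (∀ A ∈ F, ∀ B ∈ F, (A ∩ B).Nonempty) →
    (∀ A ∈ F, t ≤ #A + μ) →
    ∃ F' : Finset (Finset (Fin (2 * t))),
      IsAntichain (· ⊆ ·) (F' : Set (Finset (Fin (2 * t)))) ∧
      (∀ A ∈ F', ∀ B ∈ F', (A ∩ B).Nonempty) ∧
      F.card ≤ #F' ∧ (∀ A ∈ F', t ≤ #A) := by
  classical
  intro μ
  induction μ with
  | zero =>
    intro F hac hint hsize
    exact ⟨F, hac, hint, le_rfl, fun A hA => by simpa using hsize A hA⟩
  | succ μ ih =>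
    intro F hac hint hsize
    by_cases hdone : ∀ A ∈ F, t ≤ #A
    · exact ⟨F, hac, hint, le_rfl, hdone⟩
    push_neg at hdone
    obtain ⟨A₀, hA₀, hA₀small⟩ := hdone
    have hFne : F.Nonempty := ⟨A₀, hA₀⟩
    set k : ℕ := (F.image card).min' (hFne.image _) with hk
    obtain ⟨Ak, hAk, hAkcard⟩ : ∃ A ∈ F, #A = k := by
      have := (F.image card).min'_mem (hFne.image _)
      rw [mem_image] at this
      obtain ⟨A, hA, hAc⟩ := this
      exact ⟨A, hA, hAc⟩
    have hkmin : ∀ A ∈ F, k ≤ #A := fun A hA =>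
      min'_le _ _ (mem_image_of_mem _ hA)
    have hkt : k < t := by
      have := hkmin A₀ hA₀
      omega
    have hk1 : 1 ≤ k := by
      rw [← hAkcard]
      have := hint Ak hAk Ak hAk
      rw [inter_self] at this
      exact card_pos.2 this
    set Fk := F.filter (fun A => #A = k) with hFk
    set Frest := F.filter (fun A => ¬ #A = k) with hFrest
    have hunion : Fk ∪ Frest = F := filter_union_filter_not_eq _ F
    have hFkszd : (Fk : Set (Finset (Fin (2 * t)))).Sized k := by
      intro A hA
      exact (mem_filter.1 hA).2
    set U := ∂⁺ Fk with hU
    have hUsz : (U : Set (Finset (Fin (2 * t)))).Sized (k + 1) := hFkszd.upShadow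
    have hUF : ∀ B ∈ U, B ∉ F := by
      intro B hB hBF
      obtain ⟨A, hA, hAB, hcard⟩ := mem_upShadow_iff_exists_sdiff.1 hB
      have hAF : A ∈ F := (mem_filter.1 hA).1
      have hAne : A ≠ B := by
        intro h
        rw [h, sdiff_self] at hcard
        simp at hcard
      exact hac hAF hBF hAne hAB
    have hcardU : #Fk ≤ #U := by
      apply card_le_card_upShadow _ hFkszd
      rw [Fintype.card_fin]
      omega
    set F' := Frest ∪ U with hF'
    have hdisj : Disjoint Frest U := by
      rw [disjoint_right]
      intro B hB hB'
      exact hUF B hB (mem_of_mem_filter _ hB')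
    have hsum : #Fk + #Frest = #F := by
      rw [hFk, hFrest, ← card_union_of_disjoint (disjoint_filter_filter_not F F _),
        filter_union_filter_not_eq]
    have hcardF' : #F ≤ #F' := by
      rw [hF', card_union_of_disjoint hdisj]
      omega
    -- every member of F' contains a member of F
    have hcontain : ∀ B ∈ F', ∃ A ∈ F, A ⊆ B := by
      intro B hB
      rw [hF'] at hB
      rcases mem_union.1 hB with h | h
      · exact ⟨B, mem_of_mem_filter _ h, subset_rfl⟩
      · obtain ⟨A, hA, hAB, -⟩ := mem_upShadow_iff_exists_sdiff.1 h
        exact ⟨A, (mem_filter.1 hA).1, hAB⟩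
    have hsizes : ∀ B ∈ F', k + 1 ≤ #B := by
      intro B hB
      rw [hF'] at hB
      rcases mem_union.1 hB with h | h
      · have h1 := (mem_filter.1 h).2
        have h2 := hkmin B (mem_of_mem_filter _ h)
        omega
      · rw [hUsz h]
    have hac' : IsAntichain (· ⊆ ·) (F' : Set (Finset (Fin (2 * t)))) := by
      intro A hA B hB hne hsub
      rw [hF'] at hA hB
      simp only [coe_union, Set.mem_union, mem_coe] at hA hB
      rcases hA with hA | hA <;> rcases hB with hB | hB
      · exact hac (mem_of_mem_filter _ hA) (mem_of_mem_filter _ hB) hne hsub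
      · -- A ∈ Frest, B ∈ U : A ⊆ B with #A ≥ k+1 = #B forces A = B
        have h1 : #B ≤ #A := by
          rw [hUsz hB]
          exact hsizes A (mem_union_left _ hA)
        exact hne (eq_of_subset_of_card_le hsub h1)
      · -- A ∈ U, B ∈ Frest : some A' ∈ Fk with A' ⊆ A ⊆ B
        obtain ⟨A', hA', hA'A, -⟩ := mem_upShadow_iff_exists_sdiff.1 hA
        have hA'F : A' ∈ F := (mem_filter.1 hA').1
        have hBF : B ∈ F := mem_of_mem_filter _ hB
        have hA'B : A' ≠ B := by
          intro h
          have h1 := (mem_filter.1 hA').2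
          have h2 := (mem_filter.1 hB).2
          rw [h] at h1
          exact h2 h1
        exact hac hA'F hBF hA'B (hA'A.trans hsub)
      · have h1 : #B ≤ #A := by rw [hUsz hB, hUsz hA]
        exact hne (eq_of_subset_of_card_le hsub h1)
    have hint' : ∀ A ∈ F', ∀ B ∈ F', (A ∩ B).Nonempty := by
      intro A hA B hB
      obtain ⟨A₁, hA₁, hA₁A⟩ := hcontain A hA
      obtain ⟨B₁, hB₁, hB₁B⟩ := hcontain B hB
      obtain ⟨x, hx⟩ := hint A₁ hA₁ B₁ hB₁
      rw [mem_inter] at hx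
      exact ⟨x, mem_inter.2 ⟨hA₁A hx.1, hB₁B hx.2⟩⟩
    obtain ⟨F'', h1, h2, h3, h4⟩ := ih F' hac' hint' (by
      intro B hB
      have := hsizes B hB
      have hkμ : t ≤ k + (μ + 1) := by
        have := hsize Ak hAk
        omega
      omega)
    exact ⟨F'', h1, h2, hcardF'.trans h3, h4⟩

/-- Phase 2: push all large sets down to size at most `t+1`. -/
lemma phase2 {t : ℕ} (ht : 1 ≤ t) :
    ∀ (μ : ℕ) (F : Finset (Finset (Fin (2 * t)))),
    IsAntichain (· ⊆ ·) (F : Set (Finset (Fin (2 * t)))) →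
    (∀ A ∈ F, ∀ B ∈ F, (A ∩ B).Nonempty) →
    (∀ A ∈ F, t ≤ #A) →
    (∀ A ∈ F, #A ≤ t + 1 + μ) →
    ∃ F' : Finset (Finset (Fin (2 * t))),
      IsAntichain (· ⊆ ·) (F' : Set (Finset (Fin (2 * t)))) ∧
      (∀ A ∈ F', ∀ B ∈ F', (A ∩ B).Nonempty) ∧
      F.card ≤ #F' ∧ (∀ A ∈ F', t ≤ #A) ∧ (∀ A ∈ F', #A ≤ t + 1) := by
  classical
  intro μ
  induction μ with
  | zero =>
    intro F hac hint hlb hub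
    exact ⟨F, hac, hint, le_rfl, hlb, fun A hA => by simpa using hub A hA⟩
  | succ μ ih =>
    intro F hac hint hlb hub
    by_cases hdone : ∀ A ∈ F, #A ≤ t + 1
    · exact ⟨F, hac, hint, le_rfl, hlb, hdone⟩
    push_neg at hdone
    obtain ⟨A₀, hA₀, hA₀big⟩ := hdone
    have hFne : F.Nonempty := ⟨A₀, hA₀⟩
    set k : ℕ := (F.image card).max' (hFne.image _) with hk
    obtain ⟨Ak, hAk, hAkcard⟩ : ∃ A ∈ F, #A = k := by
      have := (F.image card).max'_mem (hFne.image _)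
      rw [mem_image] at this
      obtain ⟨A, hA, hAc⟩ := this
      exact ⟨A, hA, hAc⟩
    have hkmax : ∀ A ∈ F, #A ≤ k := fun A hA =>
      le_max' _ _ (mem_image_of_mem _ hA)
    have hkt : t + 2 ≤ k := by
      have := hkmax A₀ hA₀
      omega
    set Fk := F.filter (fun A => #A = k) with hFk
    set Frest := F.filter (fun A => ¬ #A = k) with hFrest
    have hunion : Fk ∪ Frest = F := filter_union_filter_not_eq _ F
    have hFkszd : (Fk : Set (Finset (Fin (2 * t)))).Sized k := fun A hA =>
      (mem_filter.1 hA).2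
    set U := ∂ Fk with hU
    have hUsz : (U : Set (Finset (Fin (2 * t)))).Sized (k - 1) := hFkszd.shadow
    have hUF : ∀ B ∈ U, B ∉ F := by
      intro B hB hBF
      obtain ⟨A, hA, x, hx, rfl⟩ := mem_shadow_iff.1 hB
      have hAF : A ∈ F := (mem_filter.1 hA).1
      have hne : A.erase x ≠ A := by
        intro h
        exact (notMem_erase x A) (h.symm ▸ hx)
      exact hac hBF hAF hne (erase_subset _ _)
    have hcardU : #Fk ≤ #U := by
      apply card_le_card_shadow _ hFkszd
      rw [Fintype.card_fin]
      omega
    set F' := Frest ∪ U with hF'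
    have hdisj : Disjoint Frest U := by
      rw [disjoint_right]
      intro B hB hB'
      exact hUF B hB (mem_of_mem_filter _ hB')
    have hsum : #Fk + #Frest = #F := by
      rw [hFk, hFrest, ← card_union_of_disjoint (disjoint_filter_filter_not F F _),
        filter_union_filter_not_eq]
    have hcardF' : #F ≤ #F' := by
      rw [hF', card_union_of_disjoint hdisj]
      omega
    have hlb' : ∀ B ∈ F', t ≤ #B := by
      intro B hB
      rw [hF'] at hB
      rcases mem_union.1 hB with h | h
      · exact hlb B (mem_of_mem_filter _ h)
      · rw [hUsz h]; omega
    have hub' : ∀ B ∈ F', #B ≤ t + 1 + μ := by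
      intro B hB
      rw [hF'] at hB
      rcases mem_union.1 hB with h | h
      · have h1 := (mem_filter.1 h).2
        have h2 := hkmax B (mem_of_mem_filter _ h)
        have h3 := hub B (mem_of_mem_filter _ h)
        have h4 := hub Ak hAk
        have h5 := hAkcard
        omega
      · have h1 : #B = k - 1 := hUsz h
        have h4 := hub Ak hAk
        have h5 := hAkcard
        omega
    have hac' : IsAntichain (· ⊆ ·) (F' : Set (Finset (Fin (2 * t)))) := by
      intro A hA B hB hne hsub
      rw [hF'] at hA hB
      simp only [coe_union, Set.mem_union, mem_coe] at hA hB
      rcases hA with hA | hA <;> rcases hB with hB | hB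
      · exact hac (mem_of_mem_filter _ hA) (mem_of_mem_filter _ hB) hne hsub
      · -- A ∈ Frest, B ∈ U : A ⊆ B ⊊ B₀ ∈ Fk
        obtain ⟨B₀, hB₀, x, hx, rfl⟩ := mem_shadow_iff.1 hB
        have hB₀F : B₀ ∈ F := (mem_filter.1 hB₀).1
        have hAB₀ : A ≠ B₀ := by
          intro h
          have h1 := (mem_filter.1 hA).2
          have h2 := (mem_filter.1 hB₀).2
          rw [h] at h1
          exact h1 h2
        exact hac (mem_of_mem_filter _ hA) hB₀F hAB₀ (hsub.trans (erase_subset _ _))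
      · -- A ∈ U, B ∈ Frest : #B ≤ k-1 = #A so A = B
        have h1 : #B ≤ #A := by
          rw [hUsz hA]
          have h2 := (mem_filter.1 hB).2
          have h3 := hkmax B (mem_of_mem_filter _ hB)
          omega
        exact hne (eq_of_subset_of_card_le hsub h1)
      · have h1 : #B ≤ #A := by rw [hUsz hB, hUsz hA]
        exact hne (eq_of_subset_of_card_le hsub h1)
    have hint' : ∀ A ∈ F', ∀ B ∈ F', (A ∩ B).Nonempty := by
      intro A hA B hB
      rw [hF'] at hA hB
      by_cases hAU : A ∈ U
      · apply inter_nonempty_of_card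
        rw [Fintype.card_fin]
        have h1 : #A = k - 1 := hUsz hAU
        have h2 := hlb' B hB
        omega
      · by_cases hBU : B ∈ U
        · apply inter_nonempty_of_card
          rw [Fintype.card_fin]
          have h1 : #B = k - 1 := hUsz hBU
          have h2 := hlb' A hA
          omega
        · have hAF : A ∈ F := by
            rcases mem_union.1 hA with h | h
            · exact mem_of_mem_filter _ h
            · exact absurd h hAU
          have hBF : B ∈ F := by
            rcases mem_union.1 hB with h | h
            · exact mem_of_mem_filter _ h
            · exact absurd h hBU
          exact hint A hAF B hBF
    obtain ⟨F'', h1, h2, h3, h4, h5⟩ := ih F' hac' hint' hlb' hub'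
    exact ⟨F'', h1, h2, hcardF'.trans h3, h4, h5⟩

/-- Milner's theorem for even ground set size. -/
lemma milner_even {v t : ℕ} (hv : v = 2 * t) (F : Finset (Finset (Fin v)))
    (hac : IsAntichain (· ⊆ ·) (F : Set (Finset (Fin v))))
    (hint : ∀ A ∈ F, ∀ B ∈ F, (A ∩ B).Nonempty) : #F ≤ v.choose (t + 1) := by
  classical
  subst hv
  rcases Nat.eq_zero_or_pos t with rfl | ht
  · -- t = 0 : F must be empty
    have : F = ∅ := by
      rw [eq_empty_iff_forall_notMem]
      intro A hA
      have h1 : A = ∅ := by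
        rw [eq_empty_iff_forall_notMem]
        intro x _
        exact absurd x.isLt (by omega)
      have := hint A hA A hA
      rw [h1] at this
      simp at this
    simp [this]
  obtain ⟨F₁, hac₁, hint₁, hcard₁, hlb₁⟩ := phase1 t F hac hint (fun A hA => by omega)
  obtain ⟨F₂, hac₂, hint₂, hcard₂, hlb₂, hub₂⟩ := phase2 ht (t - 1) F₁ hac₁ hint₁ hlb₁
    (fun A hA => by
      have : #A ≤ 2 * t := by simpa using card_le_univ A
      omega)
  set Ft := F₂.filter (fun A => #A = t) with hFt
  set Ftop := F₂.filter (fun A => ¬ #A = t) with hFtop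
  have hFtsz : (Ft : Set (Finset (Fin (2 * t)))).Sized t := fun A hA => (mem_filter.1 hA).2
  have hFtopsz : (Ftop : Set (Finset (Fin (2 * t)))).Sized (t + 1) := by
    intro A hA
    have h1 := (mem_filter.1 hA).2
    have h2 := hlb₂ A (mem_of_mem_filter _ hA)
    have h3 := hub₂ A (mem_of_mem_filter _ hA)
    omega
  have hFtint : ∀ A ∈ Ft, ∀ B ∈ Ft, (A ∩ B).Nonempty := fun A hA B hB =>
    hint₂ A (mem_of_mem_filter _ hA) B (mem_of_mem_filter _ hB)
  have hL : #Ft ≤ #(∂⁺ Ft) := card_le_card_upShadow_of_intersecting ht Ft hFtsz hFtint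
  have hUsz : ((∂⁺ Ft : Finset (Finset (Fin (2 * t)))) : Set (Finset (Fin (2 * t)))).Sized (t + 1) :=
    hFtsz.upShadow
  have hdisj : Disjoint (∂⁺ Ft) Ftop := by
    rw [disjoint_left]
    intro B hB hB'
    obtain ⟨A, hA, hAB, hcard⟩ := mem_upShadow_iff_exists_sdiff.1 hB
    have hAF : A ∈ F₂ := mem_of_mem_filter _ hA
    have hBF : B ∈ F₂ := mem_of_mem_filter _ hB'
    have hne : A ≠ B := by
      intro h
      rw [h, sdiff_self] at hcard
      simp at hcard
    exact hac₂ hAF hBF hne hAB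
  have hsplit : #F₂ = #Ft + #Ftop := by
    rw [hFt, hFtop, ← card_union_of_disjoint (disjoint_filter_filter_not F₂ F₂ _),
      filter_union_filter_not_eq]
  have hbound : #(∂⁺ Ft ∪ Ftop) ≤ (2 * t).choose (t + 1) := by
    have hsub : ∂⁺ Ft ∪ Ftop ⊆ powersetCard (t + 1) univ := by
      intro A hA
      rw [mem_powersetCard_univ]
      rcases mem_union.1 hA with h | h
      · exact hUsz h
      · exact hFtopsz h
    have := card_le_card hsub
    rwa [card_powersetCard, card_univ, Fintype.card_fin] at this
  rw [card_union_of_disjoint hdisj] at hbound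
  omega

/-- Milner's theorem over `Fin v`. -/
lemma milner {v : ℕ} (F : Finset (Finset (Fin v)))
    (hac : IsAntichain (· ⊆ ·) (F : Set (Finset (Fin v))))
    (hint : ∀ A ∈ F, ∀ B ∈ F, (A ∩ B).Nonempty) : #F ≤ v.choose ((v + 2) / 2) := by
  rcases Nat.even_or_odd v with he | ho
  · obtain ⟨t, ht⟩ := he
    have hv : v = 2 * t := by omega
    have h2 : (v + 2) / 2 = t + 1 := by omega
    rw [h2]
    exact milner_even hv F hac hint
  · obtain ⟨t, ht⟩ := ho
    have h2 : (v + 2) / 2 = t + 1 := by omega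
    have hs := IsAntichain.sperner hac
    rw [Fintype.card_fin] at hs
    have h3 : v / 2 = t := by omega
    rw [h3] at hs
    have h4 : v.choose t = v.choose (t + 1) := by
      rw [← Nat.choose_symm (show t ≤ v by omega)]
      congr 1
      omega
    rw [h2]
    omega


/-- Milner's theorem transported to families of subsets of a finset of naturals. -/
lemma milner_nat (G : Finset ℕ) (F : Finset (Finset ℕ)) (hsub : ∀ A ∈ F, A ⊆ G)
    (hac : IsAntichain (· ⊆ ·) (F : Set (Finset ℕ)))
    (hint : ∀ A ∈ F, ∀ B ∈ F, (A ∩ B).Nonempty) :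
    F.card ≤ (#G).choose ((#G + 2) / 2) := by
  classical
  rcases F.eq_empty_or_nonempty with rfl | ⟨A₀, hA₀⟩
  · simp
  have hGne : 0 < #G := by
    obtain ⟨x, hx⟩ := hint A₀ hA₀ A₀ hA₀
    rw [inter_self] at hx
    exact card_pos.2 ⟨x, hsub A₀ hA₀ hx⟩
  set v := #G with hv
  let e : {x // x ∈ G} ≃ Fin v := G.equivFin
  let j : ℕ → Fin v := fun x => if h : x ∈ G then e ⟨x, h⟩ else ⟨0, hGne⟩
  have hjinj : ∀ x ∈ G, ∀ y ∈ G, j x = j y → x = y := by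
    intro x hx y hy hxy
    simp only [j, dif_pos hx, dif_pos hy] at hxy
    have := e.injective hxy
    exact congrArg Subtype.val this
  let img : Finset ℕ → Finset (Fin v) := fun A => A.image j
  have himg_sub : ∀ A B : Finset ℕ, A ⊆ G → B ⊆ G → (img A ⊆ img B ↔ A ⊆ B) := by
    intro A B hA hB
    constructor
    · intro h x hx
      have : j x ∈ img B := h (mem_image_of_mem _ hx)
      obtain ⟨y, hy, hyx⟩ := mem_image.1 this
      rwa [← hjinj y (hB hy) x (hA hx) hyx]
    · intro h
      exact image_subset_image h
  have himg_inj : Set.InjOn img (F : Set (Finset ℕ)) := by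
    intro A hA B hB hAB
    have h1 : A ⊆ B := (himg_sub A B (hsub A hA) (hsub B hB)).1 (hAB ▸ subset_rfl)
    have h2 : B ⊆ A := (himg_sub B A (hsub B hB) (hsub A hA)).1 (hAB ▸ subset_rfl)
    exact subset_antisymm h1 h2
  set F' := F.image img with hF'
  have hcard : #F' = #F := card_image_of_injOn himg_inj
  have hac' : IsAntichain (· ⊆ ·) (F' : Set (Finset (Fin v))) := by
    intro A' hA' B' hB' hne hsubAB
    rw [hF'] at hA' hB'
    simp only [coe_image, Set.mem_image, mem_coe] at hA' hB'
    obtain ⟨A, hA, rfl⟩ := hA'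
    obtain ⟨B, hB, rfl⟩ := hB'
    have hABne : A ≠ B := fun h => hne (h ▸ rfl)
    exact hac hA hB hABne ((himg_sub A B (hsub A hA) (hsub B hB)).1 hsubAB)
  have hint' : ∀ A' ∈ F', ∀ B' ∈ F', (A' ∩ B').Nonempty := by
    intro A' hA' B' hB'
    rw [hF'] at hA' hB'
    obtain ⟨A, hA, rfl⟩ := mem_image.1 hA'
    obtain ⟨B, hB, rfl⟩ := mem_image.1 hB'
    obtain ⟨x, hx⟩ := hint A hA B hB
    rw [mem_inter] at hx
    exact ⟨j x, mem_inter.2 ⟨mem_image_of_mem _ hx.1, mem_image_of_mem _ hx.2⟩⟩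
  have := milner F' hac' hint'
  omega

/-- Any `m` at least as large as twice `n` works in the defining set. -/
lemma choose_lower_bound : ∀ m k : ℕ, 1 ≤ k → k ≤ m → m - k + 1 ≤ m.choose k := by
  intro m
  induction m with
  | zero => intro k h1 h2; omega
  | succ m ih =>
    intro k h1 h2
    rcases eq_or_lt_of_le h2 with rfl | hlt
    · simp
    have hk : k ≤ m := by omega
    rcases Nat.eq_zero_or_pos (k - 1) with h | h
    · -- k = 1
      have hk1 : k = 1 := by omega
      subst hk1
      simp
    · obtain ⟨u, hu⟩ : ∃ u, k = u + 1 := ⟨k - 1, by omega⟩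
      subst hu
      rw [Nat.choose_succ_succ]
      have h3 := ih (u + 1) (by omega) hk
      have h4 : 1 ≤ m.choose u := Nat.choose_pos (by omega)
      simp only [Nat.succ_eq_add_one] at *
      omega

end OverlapAux


/-- Two finite sets overlap: they intersect and neither contains the other. -/
def Overlaps (A B : Finset ℕ) : Prop :=
  (A ∩ B).Nonempty ∧ ¬ A ⊆ B ∧ ¬ B ⊆ A

/-- An overlap representation of a graph: nonempty sets assigned to vertices such that
two vertices are adjacent iff their sets overlap. -/
def IsOverlapRep {V : Type*} (G : SimpleGraph V) (S : V → Finset ℕ) : Prop :=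
  (∀ v, (S v).Nonempty) ∧ ∀ u v, G.Adj u v ↔ Overlaps (S u) (S v)

/-- The overlap number: the minimum number of elements used in an overlap representation. -/
noncomputable def overlapNumber {V : Type*} (G : SimpleGraph V) : ℕ :=
  sInf {n | ∃ S : V → Finset ℕ, IsOverlapRep G S ∧ (⋃ v, (S v : Set ℕ)).ncard = n}

/-- The overlap number of the complete graph `K n` is the least `m` with
`n ≤ C(m, ⌊(m+2)/2⌋)`. -/
theorem overlapNumber_clique (n : ℕ) (hn : 1 ≤ n) :
    overlapNumber (⊤ : SimpleGraph (Fin n)) =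
      sInf {m | n ≤ Nat.choose m ((m + 2) / 2)} := by
  classical
  set M : Set ℕ := {m | n ≤ Nat.choose m ((m + 2) / 2)} with hM
  have hMne : M.Nonempty := by
    refine ⟨2 * n, ?_⟩
    have h1 : (2 * n + 2) / 2 = n + 1 := by omega
    rw [hM, Set.mem_setOf_eq, h1]
    have := OverlapAux.choose_lower_bound (2 * n) (n + 1) (by omega) (by omega)
    omega
  set m₀ := sInf M with hm₀def
  have hm₀mem : n ≤ Nat.choose m₀ ((m₀ + 2) / 2) := Nat.sInf_mem hMne
  set k₀ := (m₀ + 2) / 2 with hk₀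
  have hk₀pos : 1 ≤ k₀ := by omega
  have hk₀le : k₀ ≤ m₀ := by
    by_contra h
    push_neg at h
    rw [Nat.choose_eq_zero_of_lt h] at hm₀mem
    omega
  -- the construction : n sets of size k₀ inside {0, ..., m₀ - 1}
  have hP : n ≤ #(Finset.powersetCard k₀ (Finset.range m₀)) := by
    rw [Finset.card_powersetCard, Finset.card_range]
    exact hm₀mem
  obtain ⟨Q, hQP, hQcard⟩ := Finset.exists_subset_card_eq hP
  let S : Fin n → Finset ℕ := fun i => (Q.equivFin.symm (Fin.cast hQcard.symm i) : {x // x ∈ Q}).1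
  have hSQ : ∀ i, S i ∈ Q := fun i => (Q.equivFin.symm (Fin.cast hQcard.symm i)).2
  have hSP : ∀ i, S i ⊆ Finset.range m₀ ∧ #(S i) = k₀ := by
    intro i
    have := hQP (hSQ i)
    rwa [Finset.mem_powersetCard] at this
  have hSinj : Function.Injective S := by
    intro a b hab
    have h1 : Q.equivFin.symm (Fin.cast hQcard.symm a) = Q.equivFin.symm (Fin.cast hQcard.symm b) :=
      Subtype.ext hab
    have h2 := Q.equivFin.symm.injective h1
    have h3 := congrArg Fin.val h2
    simp only [Fin.coe_cast] at h3
    exact Fin.ext h3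
  have hrep : IsOverlapRep (⊤ : SimpleGraph (Fin n)) S := by
    constructor
    · intro v
      rw [← Finset.card_pos, (hSP v).2]
      omega
    · intro u v
      rw [SimpleGraph.top_adj]
      constructor
      · intro huv
        have hne : S u ≠ S v := fun h => huv (hSinj h)
        refine ⟨?_, ?_, ?_⟩
        · rw [← Finset.card_pos]
          have h1 : #(S u ∪ S v) ≤ m₀ := by
            have hsub : S u ∪ S v ⊆ Finset.range m₀ :=
              Finset.union_subset (hSP u).1 (hSP v).1
            simpa [Finset.card_range] using Finset.card_le_card hsub
          have h2 := Finset.card_union_add_card_inter (S u) (S v)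
          have h3 := (hSP u).2
          have h4 := (hSP v).2
          omega
        · intro hsub
          exact hne (Finset.eq_of_subset_of_card_le hsub (by rw [(hSP u).2, (hSP v).2]))
        · intro hsub
          exact hne.symm (Finset.eq_of_subset_of_card_le hsub (by rw [(hSP u).2, (hSP v).2]))
      · rintro ⟨-, h2, -⟩
        intro huv
        exact h2 (huv ▸ subset_rfl)
  have hUfin : (⋃ v, ((S v : Finset ℕ) : Set ℕ)).Finite :=
    Set.finite_iUnion (fun i => (S i).finite_toSet)
  have hUcard : (⋃ v, ((S v : Finset ℕ) : Set ℕ)).ncard ≤ m₀ := by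
    have hUsub : (⋃ v, ((S v : Finset ℕ) : Set ℕ)) ⊆ ↑(Finset.range m₀) :=
      Set.iUnion_subset (fun i => by exact_mod_cast (hSP i).1)
    calc (⋃ v, ((S v : Finset ℕ) : Set ℕ)).ncard
        ≤ (↑(Finset.range m₀) : Set ℕ).ncard :=
          Set.ncard_le_ncard hUsub (Finset.range m₀).finite_toSet
      _ = m₀ := by rw [Set.ncard_coe_finset, Finset.card_range]
  set T : Set ℕ := {k | ∃ S' : Fin n → Finset ℕ,
      IsOverlapRep (⊤ : SimpleGraph (Fin n)) S' ∧ (⋃ v, ((S' v : Finset ℕ) : Set ℕ)).ncard = k}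
    with hT
  have hTmem : (⋃ v, ((S v : Finset ℕ) : Set ℕ)).ncard ∈ T := ⟨S, hrep, rfl⟩
  -- the lower bound : every achievable value lies in M
  have hlower : ∀ u ∈ T, u ∈ M := by
    rintro u ⟨S', hrep', hval⟩
    have hU'fin : (⋃ v, ((S' v : Finset ℕ) : Set ℕ)).Finite :=
      Set.finite_iUnion (fun i => (S' i).finite_toSet)
    set G : Finset ℕ := hU'fin.toFinset with hG
    have hGcard : #G = u := by
      rw [hG, ← Set.ncard_eq_toFinset_card _ hU'fin, hval]
    have hsubG : ∀ i, S' i ⊆ G := by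
      intro i x hx
      rw [hG, Set.Finite.mem_toFinset]
      exact Set.mem_iUnion.2 ⟨i, by exact_mod_cast hx⟩
    have hnon := hrep'.1
    have hadj := hrep'.2
    have hS'inj : Function.Injective S' := by
      intro a b hab
      by_contra hne
      have h1 := (hadj a b).1 (by rwa [SimpleGraph.top_adj])
      exact h1.2.1 (hab ▸ subset_rfl)
    set F : Finset (Finset ℕ) := Finset.univ.image S' with hF
    have hFcard : #F = n := by
      rw [hF, Finset.card_image_of_injective _ hS'inj, Finset.card_univ, Fintype.card_fin]
    have hFsub : ∀ A ∈ F, A ⊆ G := by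
      intro A hA
      rw [hF] at hA
      obtain ⟨i, -, rfl⟩ := Finset.mem_image.1 hA
      exact hsubG i
    have hFac : IsAntichain (· ⊆ ·) (F : Set (Finset ℕ)) := by
      intro A hA B hB hne hsub
      rw [Finset.mem_coe, hF] at hA hB
      obtain ⟨i, -, rfl⟩ := Finset.mem_image.1 hA
      obtain ⟨j, -, rfl⟩ := Finset.mem_image.1 hB
      have hij : i ≠ j := fun h => hne (h ▸ rfl)
      have h1 := (hadj i j).1 (by rwa [SimpleGraph.top_adj])
      exact h1.2.1 hsub
    have hFint : ∀ A ∈ F, ∀ B ∈ F, (A ∩ B).Nonempty := by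
      intro A hA B hB
      rw [hF] at hA hB
      obtain ⟨i, -, rfl⟩ := Finset.mem_image.1 hA
      obtain ⟨j, -, rfl⟩ := Finset.mem_image.1 hB
      by_cases hij : i = j
      · subst hij
        rw [Finset.inter_self]
        exact hnon i
      · exact ((hadj i j).1 (by rwa [SimpleGraph.top_adj])).1
    have hmil := OverlapAux.milner_nat G F hFsub hFac hFint
    rw [hFcard, hGcard] at hmil
    exact hmil
  have h1 : overlapNumber (⊤ : SimpleGraph (Fin n)) = sInf T := rfl
  rw [h1]
  apply le_antisymm
  · exact (Nat.sInf_le hTmem).trans hUcard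
  · have hTne : T.Nonempty := ⟨_, hTmem⟩
    exact Nat.sInf_le (hlower _ (Nat.sInf_mem hTne))
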